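/- arXiv:2511.09647 — 2 statements merged into one kernel-verified Lean document; each statement's English description precedes it below -/
import Mathlib

section
/- Let T be a linear operator and P an orthogonal projector on a finite-dimensional Hilbert space such that TP = PT = P, and suppose ‖(T^r − P)ψ‖ ≤ μ^r ‖ψ‖ for all vectors ψ and all r ≥ 1, with 0 < μ < 1. Then for any unit vector ψ₀ with ‖Pψ₀‖ = c > 0 and any r satisfying μ^r ≤ ε·c, the normalized vector ψ_out = T^r ψ₀ / ‖T^r ψ₀‖ satisfies ‖P ψ_out‖ ≥ 1 − ε. -/
/-- If `T P = P T = P`, `‖(T^r - P)ψ‖ ≤ μ^r ‖ψ‖` for all `ψ` and `r ≥ 1` with `0 < μ < 1`,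
then for a unit vector `ψ₀` with `‖P ψ₀‖ = c > 0` and `r` with `μ^r ≤ ε·c`, the normalized
vector `ψ_out = T^r ψ₀ / ‖T^r ψ₀‖` satisfies `‖P ψ_out‖ ≥ 1 - ε`. -/
theorem stmt_4 {H : Type*} [NormedAddCommGroup H] [InnerProductSpace ℂ H]
    [FiniteDimensional ℂ H] (T P : H →L[ℂ] H)
    (hPsym : ∀ x y : H, inner ℂ (P x) y = inner x (P y : H) (𝕜 := ℂ))
    (hPidem : P.comp P = P)
    (hTP : T.comp P = P) (hPT : P.comp T = P)
    (μ : ℝ) (hμ0 : 0 < μ) (hμ1 : μ < 1)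
    (hconv : ∀ (ψ : H) (r : ℕ), 1 ≤ r → ‖(T ^ r - P) ψ‖ ≤ μ ^ r * ‖ψ‖)
    (ψ₀ : H) (hψ₀ : ‖ψ₀‖ = 1) (c ε : ℝ) (hc : ‖P ψ₀‖ = c) (hc0 : 0 < c)
    (r : ℕ) (hr : 1 ≤ r) (hrε : μ ^ r ≤ ε * c) :
    ‖P ((‖(T ^ r) ψ₀‖)⁻¹ • (T ^ r) ψ₀)‖ ≥ 1 - ε := by
  -- P ∘ T^n = P pointwise
  have hPTn : ∀ (n : ℕ) (x : H), P ((T ^ n) x) = P x := by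
    intro n
    induction n with
    | zero => intro x; simp
    | succ n ih =>
      intro x
      rw [pow_succ']
      have h1 : (T * T ^ n) x = T ((T ^ n) x) := rfl
      rw [h1]
      have h2 : P (T ((T ^ n) x)) = P ((T ^ n) x) :=
        DFunLike.congr_fun hPT ((T ^ n) x)
      rw [h2, ih]
  set v := (T ^ r) ψ₀ with hv
  have hPv : P v = P ψ₀ := hPTn r ψ₀
  have hm : ‖(T ^ r - P) ψ₀‖ ≤ μ ^ r := by
    have := hconv ψ₀ r hr
    simpa [hψ₀] using this
  have hvub : ‖v‖ ≤ c + μ ^ r := by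
    have : v = P ψ₀ + (T ^ r - P) ψ₀ := by
      simp [hv, ContinuousLinearMap.sub_apply]
    rw [this]
    calc ‖P ψ₀ + (T ^ r - P) ψ₀‖ ≤ ‖P ψ₀‖ + ‖(T ^ r - P) ψ₀‖ := norm_add_le _ _
      _ ≤ c + μ ^ r := by rw [hc]; linarith
  have hv0 : 0 < ‖v‖ := by
    rcases eq_or_ne v 0 with h | h
    · exfalso
      have : P v = 0 := by rw [h]; simp
      rw [hPv] at this
      rw [this] at hc
      simp at hc
      linarith
    · exact norm_pos_iff.mpr h
  have hkey : ‖P ((‖v‖)⁻¹ • v)‖ = ‖v‖⁻¹ * c := by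
    rw [P.map_smul_of_tower, norm_smul, hPv, hc]
    simp [abs_of_pos (inv_pos.mpr hv0)]
  rw [hkey]
  rw [ge_iff_le, ← sub_nonneg]
  have h1 : ‖v‖⁻¹ * c - (1 - ε) = (c - (1 - ε) * ‖v‖) / ‖v‖ := by
    field_simp
  rw [h1]
  apply div_nonneg _ (le_of_lt hv0)
  have hμr : 0 < μ ^ r := pow_pos hμ0 r
  have hε0 : 0 < ε := by nlinarith
  rcases le_or_gt 1 ε with hε | hε
  · nlinarith
  · have := mul_le_mul_of_nonneg_left hvub (by linarith : (0:ℝ) ≤ 1 - ε)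
    nlinarith
end

section
/- Let ψ = ∑_{x∈S} α_x Θ_x + ∑_{x∉S} α_x Θ_x be a unit vector (where Θ_x are vectors with Gram matrix ⟨Θ_x|Θ_y⟩ = ⟨x|M^{⊗n}|y⟩ for M = [[1, cos θ],[cos θ,1]]) that is orthogonal to Θ_s for every s ∈ S. Then ∑_{x∉S} |α_x|² ≥ (1 + cos θ)^{−n}. -/
open Finset

private lemma rowsum (n : ℕ) (c : ℝ) (x : Fin n → Bool) :
    ∑ y : Fin n → Bool, c ^ hammingDist x y = (1 + c) ^ n := by
  have h1 : ∀ y : Fin n → Bool, c ^ hammingDist x y = ∏ i, (if x i = y i then 1 else c) := by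
    intro y
    rw [Finset.prod_ite, Finset.prod_const_one, Finset.prod_const, one_mul, hammingDist]
  rw [Finset.sum_congr rfl fun y _ => h1 y, ← Fintype.prod_sum fun i b => if x i = b then (1:ℝ) else c]
  have : ∀ i : Fin n, (∑ b : Bool, if x i = b then (1:ℝ) else c) = 1 + c := by
    intro i; cases hx : x i <;> simp [hx, add_comm]
  rw [Finset.prod_congr rfl fun i _ => this i, Finset.prod_const, Finset.card_univ, Fintype.card_fin]


/-- Let `Θ_x` (for `x ∈ {0,1}^n`) be vectors with Gram matrix
`⟨Θ_x, Θ_y⟩ = ⟨x|M^{⊗n}|y⟩ = cos(θ)^{D(x,y)}` for `M = [[1, cos θ],[cos θ, 1]]`, and let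
`ψ = ∑_x α_x Θ_x` be a unit vector orthogonal to `Θ_s` for every `s ∈ S`. Then
`∑_{x∉S} |α_x|² ≥ (1 + cos θ)^{-n}`. -/
theorem stmt_19 {H : Type*} [NormedAddCommGroup H] [InnerProductSpace ℂ H]
    [FiniteDimensional ℂ H] (n : ℕ) (θ : ℝ) (hθ : θ ∈ Set.Ioo 0 (Real.pi / 2))
    (Θ : (Fin n → Bool) → H)
    (hGram : ∀ x y : Fin n → Bool,
      (inner ℂ (Θ x) (Θ y) : ℂ) = (Real.cos θ ^ hammingDist x y : ℝ))
    (S : Finset (Fin n → Bool)) (α : (Fin n → Bool) → ℂ)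
    (ψ : H) (hψ : ψ = ∑ x : Fin n → Bool, α x • Θ x)
    (hunit : ‖ψ‖ = 1)
    (horth : ∀ s ∈ S, (inner ℂ (Θ s) ψ : ℂ) = 0) :
    ∑ x ∈ Sᶜ, ‖α x‖ ^ 2 ≥ ((1 + Real.cos θ) ^ n)⁻¹ := by
  obtain ⟨hθ0, hθ2⟩ := hθ
  set c : ℝ := Real.cos θ with hc
  have hc0 : 0 < c := Real.cos_pos_of_mem_Ioo ⟨by linarith [Real.pi_pos], hθ2⟩
  set L : ℝ := (1 + c) ^ n with hLdef
  have hL0 : 0 < L := pow_pos (by linarith) n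
  set β : (Fin n → Bool) → ℂ := fun x => inner ℂ (Θ x) ψ with hβ
  -- inner ℂ ψ (Θ x) = conj (β x)
  have hconj : ∀ x, (inner ℂ ψ (Θ x) : ℂ) = (starRingEnd ℂ) (β x) := by
    intro x; rw [hβ]; exact (inner_conj_symm _ _).symm
  -- ⟪ψ, ψ⟫ = ∑ conj (α x) * β x
  have hpsipsi : (inner ℂ ψ ψ : ℂ) = ∑ x : Fin n → Bool, (starRingEnd ℂ) (α x) * β x := by
    conv_lhs => rw [hψ]
    rw [sum_inner]
    exact Finset.sum_congr rfl fun x _ => by rw [inner_smul_left, ← hψ]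
  have hone : (inner ℂ ψ ψ : ℂ) = 1 := by
    rw [inner_self_eq_norm_sq_to_K, hunit]; norm_num
  -- sum over S vanishes
  have hsplit : (1 : ℂ) = ∑ x ∈ Sᶜ, (starRingEnd ℂ) (α x) * β x := by
    rw [← hone, hpsipsi, ← Finset.sum_add_sum_compl S]
    have : ∑ x ∈ S, (starRingEnd ℂ) (α x) * β x = 0 :=
      Finset.sum_eq_zero fun s hs => by rw [hβ]; simp [horth s hs]
    rw [this, zero_add]
  -- total β norm
  set B : ℝ := ∑ x : Fin n → Bool, ‖β x‖ ^ 2 with hBdef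
  have hB0 : 0 ≤ B := Finset.sum_nonneg fun x _ => sq_nonneg _
  -- φ = ∑ β x • Θ x
  set φ : H := ∑ x : Fin n → Bool, β x • Θ x with hφ
  have hz : ∀ z : ℂ, z * (starRingEnd ℂ) z = ((‖z‖ ^ 2 : ℝ) : ℂ) := by
    intro z
    rw [Complex.mul_conj]
    norm_cast
    rw [Complex.normSq_eq_norm_sq]
  have hpsiphi : (inner ℂ ψ φ : ℂ) = (B : ℂ) := by
    rw [hφ, inner_sum, hBdef]
    push_cast
    refine Finset.sum_congr rfl fun x _ => ?_
    rw [inner_smul_right, hconj x, hz (β x)]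
    push_cast
    ring
  -- ‖φ‖² ≤ L * B
  have hphinorm : ‖φ‖ ^ 2 ≤ L * B := by
    have h1 : (‖φ‖ ^ 2 : ℝ) = Complex.re (inner ℂ φ φ : ℂ) := by
      rw [← inner_self_eq_norm_sq (𝕜 := ℂ)]; rfl
    have h2 : (inner ℂ φ φ : ℂ)
        = ∑ x : Fin n → Bool, ∑ y : Fin n → Bool,
            ((starRingEnd ℂ) (β x) * β y) * ((c ^ hammingDist x y : ℝ) : ℂ) := by
      conv_lhs => rw [hφ]
      rw [sum_inner]
      refine Finset.sum_congr rfl fun x _ => ?_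
      rw [inner_smul_left, inner_sum, Finset.mul_sum]
      refine Finset.sum_congr rfl fun y _ => ?_
      rw [inner_smul_right, hGram]; ring
    have h3 : Complex.re (inner ℂ φ φ : ℂ)
        = ∑ x : Fin n → Bool, ∑ y : Fin n → Bool,
            Complex.re ((starRingEnd ℂ) (β x) * β y) * (c ^ hammingDist x y) := by
      rw [h2, Complex.re_sum]
      refine Finset.sum_congr rfl fun x _ => ?_
      rw [Complex.re_sum]
      refine Finset.sum_congr rfl fun y _ => ?_
      rw [Complex.mul_re, Complex.ofReal_re, Complex.ofReal_im]
      ring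
    have hbound : ∀ x y : Fin n → Bool,
        Complex.re ((starRingEnd ℂ) (β x) * β y) * (c ^ hammingDist x y)
          ≤ ((‖β x‖ ^ 2 + ‖β y‖ ^ 2) / 2) * (c ^ hammingDist x y) := by
      intro x y
      have hcpow : (0:ℝ) ≤ c ^ hammingDist x y := pow_nonneg hc0.le _
      refine mul_le_mul_of_nonneg_right ?_ hcpow
      have h4 : Complex.re ((starRingEnd ℂ) (β x) * β y) ≤ ‖β x‖ * ‖β y‖ := by
        calc Complex.re ((starRingEnd ℂ) (β x) * β y) ≤ ‖(starRingEnd ℂ) (β x) * β y‖ :=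
              Complex.re_le_norm _
        _ = ‖β x‖ * ‖β y‖ := by rw [norm_mul, RCLike.norm_conj]
      nlinarith [sq_nonneg (‖β x‖ - ‖β y‖)]
    have h5 : ∑ x : Fin n → Bool, ∑ y : Fin n → Bool,
        ((‖β x‖ ^ 2 + ‖β y‖ ^ 2) / 2) * (c ^ hammingDist x y) = L * B := by
      have hsym : ∀ x y : Fin n → Bool, (c ^ hammingDist y x) = (c ^ hammingDist x y) := by
        intro x y; rw [hammingDist_comm]
      calc ∑ x : Fin n → Bool, ∑ y : Fin n → Bool,
            ((‖β x‖ ^ 2 + ‖β y‖ ^ 2) / 2) * (c ^ hammingDist x y)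
          = ∑ x : Fin n → Bool, ∑ y : Fin n → Bool,
            (‖β x‖ ^ 2 / 2 * c ^ hammingDist x y + ‖β y‖ ^ 2 / 2 * c ^ hammingDist x y) := by
            refine Finset.sum_congr rfl fun x _ => Finset.sum_congr rfl fun y _ => by ring
        _ = (∑ x : Fin n → Bool, ∑ y : Fin n → Bool, ‖β x‖ ^ 2 / 2 * c ^ hammingDist x y)
            + ∑ x : Fin n → Bool, ∑ y : Fin n → Bool, ‖β y‖ ^ 2 / 2 * c ^ hammingDist x y := by
            rw [← Finset.sum_add_distrib]
            exact Finset.sum_congr rfl fun x _ => Finset.sum_add_distrib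
        _ = L * B := by
            conv_lhs => arg 2; rw [Finset.sum_comm]
            have e1 : ∀ x : Fin n → Bool,
                ∑ y : Fin n → Bool, ‖β x‖ ^ 2 / 2 * c ^ hammingDist x y = ‖β x‖ ^ 2 / 2 * L := by
              intro x; rw [← Finset.mul_sum, rowsum]
            have e2 : ∀ y : Fin n → Bool,
                ∑ x : Fin n → Bool, ‖β y‖ ^ 2 / 2 * c ^ hammingDist x y = ‖β y‖ ^ 2 / 2 * L := by
              intro y
              rw [← Finset.mul_sum]
              congr 1
              rw [Finset.sum_congr rfl fun i (_ : i ∈ univ) => (hsym i y).symm, rowsum]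
            rw [Finset.sum_congr rfl fun x _ => e1 x, Finset.sum_congr rfl fun y _ => e2 y,
              ← Finset.sum_add_distrib]
            rw [hBdef, Finset.mul_sum]
            refine Finset.sum_congr rfl fun x _ => by ring
    calc ‖φ‖ ^ 2 = Complex.re (inner ℂ φ φ : ℂ) := h1
      _ = _ := h3
      _ ≤ _ := Finset.sum_le_sum fun x _ => Finset.sum_le_sum fun y _ => hbound x _
      _ = L * B := h5
  -- B ≤ L
  have hBle : B ≤ L := by
    have hcs : ‖(inner ℂ ψ φ : ℂ)‖ ≤ ‖ψ‖ * ‖φ‖ := norm_inner_le_norm _ _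
    rw [hpsiphi, hunit, one_mul] at hcs
    have : B ≤ ‖φ‖ := by
      rwa [Complex.norm_real, Real.norm_eq_abs, abs_of_nonneg hB0] at hcs
    have h6 : B ^ 2 ≤ L * B := le_trans (by nlinarith [norm_nonneg φ]) hphinorm
    nlinarith
  -- Cauchy-Schwarz on the compl sum
  have hABs : (1:ℝ) ≤ (∑ x ∈ Sᶜ, ‖α x‖ ^ 2) * ∑ x ∈ Sᶜ, ‖β x‖ ^ 2 := by
    have h7 : (1:ℝ) ≤ ∑ x ∈ Sᶜ, ‖α x‖ * ‖β x‖ := by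
      calc (1:ℝ) = Complex.re (∑ x ∈ Sᶜ, (starRingEnd ℂ) (α x) * β x) := by
            rw [← hsplit]; simp
        _ ≤ ‖∑ x ∈ Sᶜ, (starRingEnd ℂ) (α x) * β x‖ := Complex.re_le_norm _
        _ ≤ ∑ x ∈ Sᶜ, ‖(starRingEnd ℂ) (α x) * β x‖ := norm_sum_le _ _
        _ = ∑ x ∈ Sᶜ, ‖α x‖ * ‖β x‖ := by
            refine Finset.sum_congr rfl fun x _ => ?_
            rw [norm_mul, RCLike.norm_conj]
    have h8 := Finset.sum_mul_sq_le_sq_mul_sq Sᶜ (fun x => ‖α x‖) (fun x => ‖β x‖)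
    nlinarith [Finset.sum_nonneg (s := Sᶜ) fun x _ => mul_nonneg (norm_nonneg (α x)) (norm_nonneg (β x))]
  have hBcompl : ∑ x ∈ Sᶜ, ‖β x‖ ^ 2 ≤ B :=
    Finset.sum_le_sum_of_subset_of_nonneg (Finset.subset_univ _) fun x _ _ => sq_nonneg _
  have hA0 : 0 ≤ ∑ x ∈ Sᶜ, ‖α x‖ ^ 2 := Finset.sum_nonneg fun x _ => sq_nonneg _
  have hfinal : (1:ℝ) ≤ (∑ x ∈ Sᶜ, ‖α x‖ ^ 2) * L := by
    calc (1:ℝ) ≤ (∑ x ∈ Sᶜ, ‖α x‖ ^ 2) * ∑ x ∈ Sᶜ, ‖β x‖ ^ 2 := hABs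
      _ ≤ (∑ x ∈ Sᶜ, ‖α x‖ ^ 2) * L :=
          mul_le_mul_of_nonneg_left (le_trans hBcompl hBle) hA0
  rw [ge_iff_le, inv_eq_one_div, div_le_iff₀ hL0]
  linarith
end
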